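/- For all natural numbers N ≥ 2, K ≥ 1 and all natural numbers G₂ with G₂ < N^{K−1}, the inequality G₂ · N < G₂ · (N − 1) · r + 1 holds, where r = (N^K − 1)/((N − 1)·N^{K−1}). Equivalently, for any natural number G₁, the download cost G₁·N^{K−1}·r + G₂·N is strictly less than (G₁·N^{K−1} + G₂·(N−1))·r + 1. -/

import Mathlib

/-- Case `L₂ = 0` of the achievability proof: for `G₂ < N^{K−1}`,
`G₂·N < G₂·(N−1)·r + 1` where `r = 1/C`; equivalently the achieved download cost
`G₁·N^{K−1}·r + G₂·N` is strictly less than `L·r + 1` with `L = G₁·N^{K−1} + G₂·(N−1)`. -/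
theorem download_gap_case_L2_zero (N K G₂ : ℕ) (hN : 2 ≤ N) (hK : 1 ≤ K)
    (hG₂ : G₂ < N ^ (K - 1)) :
    (G₂ : ℚ) * N
        < (G₂ : ℚ) * ((N : ℚ) - 1)
            * (((N : ℚ) ^ K - 1) / (((N : ℚ) - 1) * (N : ℚ) ^ (K - 1))) + 1
    ∧ ∀ G₁ : ℕ,
        (G₁ : ℚ) * (N : ℚ) ^ (K - 1)
            * (((N : ℚ) ^ K - 1) / (((N : ℚ) - 1) * (N : ℚ) ^ (K - 1))) + (G₂ : ℚ) * N
          < ((G₁ : ℚ) * (N : ℚ) ^ (K - 1) + (G₂ : ℚ) * ((N : ℚ) - 1))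
            * (((N : ℚ) ^ K - 1) / (((N : ℚ) - 1) * (N : ℚ) ^ (K - 1))) + 1 := by
  have hN1 : (0:ℚ) < (N:ℚ) - 1 := by
    have : (2:ℚ) ≤ (N:ℚ) := by exact_mod_cast hN
    linarith
  have hP : (0:ℚ) < (N:ℚ) ^ (K - 1) := by positivity
  have hKpow : (N:ℚ) ^ K = (N:ℚ) * (N:ℚ) ^ (K - 1) := by
    rw [← pow_succ']
    congr 1
    omega
  have hG₂' : (G₂:ℚ) < (N:ℚ) ^ (K - 1) := by exact_mod_cast hG₂
  have h1 : (G₂ : ℚ) * N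
      < (G₂ : ℚ) * ((N : ℚ) - 1)
          * (((N : ℚ) ^ K - 1) / (((N : ℚ) - 1) * (N : ℚ) ^ (K - 1))) + 1 := by
    rw [hKpow]
    rw [show (G₂ : ℚ) * ((N : ℚ) - 1) * (((N:ℚ) * (N:ℚ) ^ (K-1) - 1) /
        (((N : ℚ) - 1) * (N : ℚ) ^ (K - 1))) =
        (G₂ : ℚ) * (((N:ℚ) * (N:ℚ) ^ (K-1) - 1) / (N : ℚ) ^ (K - 1)) by
      field_simp]
    have h2 : (G₂:ℚ) / (N:ℚ)^(K-1) < 1 := (div_lt_one hP).mpr hG₂'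
    have : (G₂ : ℚ) * (((N:ℚ) * (N:ℚ) ^ (K-1) - 1) / (N : ℚ) ^ (K - 1))
        = (G₂:ℚ) * N - (G₂:ℚ) / (N:ℚ)^(K-1) := by field_simp
    rw [this]; linarith
  refine ⟨h1, fun G₁ => ?_⟩
  have := h1
  nlinarith [this, sq_nonneg ((G₁:ℚ))]
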